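/- For any subset A of ℝ, if the Hattori space (ℝ, τ_A) is σ-compact, then ℝ\A is countable and nowhere dense in (ℝ, τ_A). -/

import Mathlib

open Set

/-- The Hattori topology on ℝ: points of `A` have Euclidean neighborhood base
`(x-ε, x+ε)`, points outside `A` have Sorgenfrey neighborhood base `[x, x+ε)`. -/
def hattori (A : Set ℝ) : TopologicalSpace ℝ where
  IsOpen U := ∀ x ∈ U, ∃ ε > (0 : ℝ),
    (x ∈ A → Ioo (x - ε) (x + ε) ⊆ U) ∧ (x ∉ A → Ico x (x + ε) ⊆ U)
  isOpen_univ := fun x _ => ⟨1, one_pos, fun _ => subset_univ _, fun _ => subset_univ _⟩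
  isOpen_inter := by
    intro U V hU hV x hx
    obtain ⟨ε₁, hε₁, h₁, h₁'⟩ := hU x hx.1
    obtain ⟨ε₂, hε₂, h₂, h₂'⟩ := hV x hx.2
    have l1 := min_le_left ε₁ ε₂
    have l2 := min_le_right ε₁ ε₂
    refine ⟨min ε₁ ε₂, lt_min hε₁ hε₂, fun hA => ?_, fun hA => ?_⟩
    · intro y hy
      exact ⟨h₁ hA ⟨by linarith [hy.1], by linarith [hy.2]⟩,
             h₂ hA ⟨by linarith [hy.1], by linarith [hy.2]⟩⟩
    · intro y hy
      exact ⟨h₁' hA ⟨hy.1, by linarith [hy.2]⟩, h₂' hA ⟨hy.1, by linarith [hy.2]⟩⟩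
  isOpen_sUnion := by
    intro S hS x hx
    obtain ⟨U, hU, hxU⟩ := hx
    obtain ⟨ε, hε, h, h'⟩ := hS U hU x hxU
    exact ⟨ε, hε, fun hA => (h hA).trans (subset_sUnion_of_mem hU),
      fun hA => (h' hA).trans (subset_sUnion_of_mem hU)⟩

/-- The Sorgenfrey (lower limit) topology on ℝ. -/
def sorgenfrey : TopologicalSpace ℝ :=
  TopologicalSpace.generateFrom {S | ∃ a b : ℝ, S = Ico a b}

lemma hattori_isOpen_iff {A U : Set ℝ} : @IsOpen ℝ (hattori A) U ↔ ∀ x ∈ U, ∃ ε > (0 : ℝ),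
    (x ∈ A → Ioo (x - ε) (x + ε) ⊆ U) ∧ (x ∉ A → Ico x (x + ε) ⊆ U) := Iff.rfl

lemma hattori_isOpen_of_isOpen {A U : Set ℝ} (hU : IsOpen U) : @IsOpen ℝ (hattori A) U := by
  rw [hattori_isOpen_iff]
  intro x hx
  obtain ⟨ε, hε, hball⟩ := Metric.isOpen_iff.1 hU x hx
  rw [Real.ball_eq_Ioo] at hball
  exact ⟨ε, hε, fun _ => hball, fun _ => fun y hy => hball ⟨by linarith [hy.1], hy.2⟩⟩

lemma hattori_le (A : Set ℝ) : hattori A ≤ (inferInstance : TopologicalSpace ℝ) := by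
  rw [TopologicalSpace.le_def]
  exact fun U hU => hattori_isOpen_of_isOpen hU

lemma isCompact_of_hattori {A K : Set ℝ} (hK : @IsCompact ℝ (hattori A) K) : IsCompact K := by
  have hc : @Continuous ℝ ℝ (hattori A) _ id := continuous_id_of_le (hattori_le A)
  simpa using @IsCompact.image ℝ ℝ (hattori A) _ K id hK hc

lemma hattori_isOpen_Ico {A : Set ℝ} {a b : ℝ} (ha : a ∉ A) :
    @IsOpen ℝ (hattori A) (Ico a b) := by
  rw [hattori_isOpen_iff]
  intro x hx
  rcases eq_or_lt_of_le hx.1 with heq | hlt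
  · refine ⟨b - a, by linarith [hx.2], fun hA => absurd (heq ▸ hA) ha, fun _ => ?_⟩
    intro y hy
    exact ⟨by linarith [hy.1, heq.le], by linarith [hy.2, heq.le]⟩
  · refine ⟨min (x - a) (b - x), lt_min (by linarith) (by linarith [hx.2]), fun _ => ?_, fun _ => ?_⟩
    · intro y hy
      have := min_le_left (x - a) (b - x); have := min_le_right (x - a) (b - x)
      exact ⟨by linarith [hy.1], by linarith [hy.2]⟩
    · intro y hy
      have := min_le_left (x - a) (b - x); have := min_le_right (x - a) (b - x)
      exact ⟨by linarith [hy.1], by linarith [hy.2]⟩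

lemma hattori_left_gap {A K : Set ℝ} (hK : @IsCompact ℝ (hattori A) K) {x : ℝ} (hxA : x ∉ A) :
    ∃ ε > (0 : ℝ), K ∩ Ico (x - ε) x = ∅ := by
  have hIic : @IsClosed ℝ (hattori A) (Iic x) := by
    rw [← @isOpen_compl_iff ℝ (Iic x) (hattori A), compl_Iic]
    exact hattori_isOpen_of_isOpen isOpen_Ioi
  have hK' : @IsCompact ℝ (hattori A) (K ∩ Iic x) := @IsCompact.inter_right ℝ (hattori A) K (Iic x) hK hIic
  set U : {t : ℝ // t < x} → Set ℝ := fun t => Iio t.1 ∪ Ico x (x + 1) with hU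
  have hUopen : ∀ t, @IsOpen ℝ (hattori A) (U t) := fun t =>
    @IsOpen.union ℝ _ _ (hattori A) (hattori_isOpen_of_isOpen isOpen_Iio)
      (hattori_isOpen_Ico hxA)
  have hcover : K ∩ Iic x ⊆ ⋃ t, U t := by
    rintro z ⟨hzK, hzx⟩
    rcases lt_or_eq_of_le (mem_Iic.mp hzx) with hlt | heq
    · exact mem_iUnion.2 ⟨⟨(z + x) / 2, by linarith⟩, Or.inl (by simpa using by linarith)⟩
    · exact mem_iUnion.2 ⟨⟨x - 1, by linarith⟩, Or.inr ⟨heq.ge, by linarith [heq.le]⟩⟩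
  obtain ⟨F, hF⟩ := @IsCompact.elim_finite_subcover ℝ (hattori A) (K ∩ Iic x) {t : ℝ // t < x} hK' U hUopen hcover
  rcases F.eq_empty_or_nonempty with hFe | hFne
  · refine ⟨1, one_pos, eq_empty_iff_forall_notMem.2 fun z hz => ?_⟩
    have := hF ⟨hz.1, le_of_lt hz.2.2⟩
    simp [hFe] at this
  · set m := F.sup' hFne (fun t => t.1) with hm
    have hmx : m < x := (Finset.sup'_lt_iff hFne).2 fun t _ => t.2
    refine ⟨x - m, by linarith, eq_empty_iff_forall_notMem.2 fun z hz => ?_⟩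
    have hzK := hz.1
    have hz1 := hz.2.1
    have hz2 := hz.2.2
    have := hF ⟨hzK, le_of_lt hz2⟩
    rw [mem_iUnion₂] at this
    obtain ⟨t, htF, hzt⟩ := this
    rcases hzt with hzt | hzt
    · have : t.1 ≤ m := Finset.le_sup' (fun t => t.1) htF
      have : z < m := lt_of_lt_of_le hzt this
      linarith
    · exact absurd hzt.1 (not_le.2 hz2)

lemma countable_of_left_gapped {S : Set ℝ}
    (hgap : ∀ x ∈ S, ∃ ε > (0 : ℝ), S ∩ Ioo (x - ε) x = ∅) : S.Countable := by
  have key : ∀ x : S, ∃ q : ℚ, (q : ℝ) < (x : ℝ) ∧ S ∩ Ioo (q : ℝ) (x : ℝ) = ∅ := by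
    intro x
    obtain ⟨ε, hε, hempty⟩ := hgap x x.2
    obtain ⟨q, hq1, hq2⟩ := exists_rat_btwn (show (x : ℝ) - ε < (x : ℝ) by linarith)
    refine ⟨q, hq2, ?_⟩
    rw [eq_empty_iff_forall_notMem] at hempty ⊢
    intro y hy
    exact hempty y ⟨hy.1, by constructor <;> [linarith [hy.2.1]; exact hy.2.2]⟩
  choose f hf1 hf2 using key
  have hinj : Function.Injective f := by
    have key2 : ∀ u v : S, (u : ℝ) < (v : ℝ) → f u < f v := by
      intro u v huv
      have hule : (u : ℝ) ≤ (f v : ℝ) := by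
        by_contra hc
        push_neg at hc
        have : (u : ℝ) ∈ S ∩ Ioo ((f v : ℝ)) (v : ℝ) := ⟨u.2, hc, huv⟩
        rw [hf2 v] at this
        exact notMem_empty _ this
      exact_mod_cast lt_of_lt_of_le (hf1 u) hule
    intro x y hxy
    by_contra hne
    have hne' : (x : ℝ) ≠ (y : ℝ) := fun hc => hne (Subtype.ext hc)
    rcases lt_or_gt_of_ne hne' with hlt | hgt
    · exact absurd hxy (ne_of_lt (key2 x y hlt))
    · exact absurd hxy.symm (ne_of_lt (key2 y x hgt))
  exact countable_coe_iff.1 hinj.countable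

theorem stmt13 (A : Set ℝ) (h : @SigmaCompactSpace ℝ (hattori A)) :
    Aᶜ.Countable ∧ @interior ℝ (hattori A) (@closure ℝ (hattori A) Aᶜ) = ∅ := by
  obtain ⟨K, hKc, hKU⟩ := h.isSigmaCompact_univ
  have hcount : Aᶜ.Countable := by
    have hsub : Aᶜ ⊆ ⋃ n, (Aᶜ ∩ K n) := by
      intro x hx
      have hx2 : x ∈ ⋃ n, K n := by rw [hKU]; trivial
      obtain ⟨n, hn⟩ := mem_iUnion.1 hx2
      exact mem_iUnion.2 ⟨n, hx, hn⟩
    refine Set.Countable.mono hsub (countable_iUnion fun n => ?_)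
    refine countable_of_left_gapped fun x hx => ?_
    obtain ⟨ε, hε, hgap⟩ := hattori_left_gap (hKc n) (mem_compl_iff A x |>.1 hx.1)
    refine ⟨ε, hε, eq_empty_iff_forall_notMem.2 fun y hy => ?_⟩
    have : y ∈ K n ∩ Ico (x - ε) x := ⟨hy.1.2, le_of_lt hy.2.1, hy.2.2⟩
    rw [hgap] at this
    exact notMem_empty _ this
  refine ⟨hcount, ?_⟩
  by_contra hne
  obtain ⟨x, hx⟩ := nonempty_iff_ne_empty.2 hne
  have hIntOpen : @IsOpen ℝ (hattori A) (@interior ℝ (hattori A) (@closure ℝ (hattori A) Aᶜ)) :=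
    @isOpen_interior ℝ (hattori A) _
  obtain ⟨ε, hε, h1, h2⟩ := hattori_isOpen_iff.1 hIntOpen x hx
  have hIco : Ico x (x + ε) ⊆ @closure ℝ (hattori A) Aᶜ := by
    by_cases hxA : x ∈ A
    · intro y hy
      exact @interior_subset ℝ (hattori A) (@closure ℝ (hattori A) Aᶜ) _ (h1 hxA ⟨by linarith [hy.1], hy.2⟩)
    · intro y hy
      exact @interior_subset ℝ (hattori A) (@closure ℝ (hattori A) Aᶜ) _ (h2 hxA hy)
  obtain ⟨a₀, ha₀⟩ : ∃ a₀ : ℝ, a₀ = x + ε / 4 := ⟨_, rfl⟩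
  obtain ⟨b₀, hb₀⟩ : ∃ b₀ : ℝ, b₀ = x + ε / 2 := ⟨_, rfl⟩
  have hab : a₀ < b₀ := by rw [ha₀, hb₀]; linarith
  have hsubcl : Icc a₀ b₀ ⊆ @closure ℝ (hattori A) Aᶜ := by
    intro y hy
    refine hIco ⟨by linarith [hy.1, ha₀], by linarith [hy.2, hb₀]⟩
  have hFclosed : ∀ n, IsClosed (K n ∩ Icc a₀ b₀) := fun n =>
    ((isCompact_of_hattori (hKc n)).isClosed).inter isClosed_Icc
  have hexists : ∃ n, (interior (K n ∩ Icc a₀ b₀)).Nonempty := by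
    by_contra hc
    push_neg at hc
    have hmeag : ∀ n, IsMeagre (K n ∩ Icc a₀ b₀) := by
      intro n
      have hd : Dense (K n ∩ Icc a₀ b₀)ᶜ :=
        interior_eq_empty_iff_dense_compl.1 (hc n)
      exact residual_of_dense_open (hFclosed n).isOpen_compl hd
    have hunion : IsMeagre (⋃ n, K n ∩ Icc a₀ b₀) := isMeagre_iUnion hmeag
    have hcover : Icc a₀ b₀ ⊆ ⋃ n, K n ∩ Icc a₀ b₀ := by
      intro y hy
      have hy2 : y ∈ ⋃ n, K n := by rw [hKU]; trivial
      obtain ⟨n, hn⟩ := mem_iUnion.1 hy2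
      exact mem_iUnion.2 ⟨n, hn, hy⟩
    have hmIcc : IsMeagre (Icc a₀ b₀) := hunion.mono hcover
    have hd : Dense (Icc a₀ b₀)ᶜ := dense_of_mem_residual hmIcc
    obtain ⟨z, hz1, hz2⟩ := hd.exists_mem_open isOpen_Ioo (nonempty_Ioo.2 hab)
    exact hz1 (Ioo_subset_Icc_self hz2)
  obtain ⟨n, z, hz⟩ := hexists
  obtain ⟨δ, hδ, hball⟩ := Metric.isOpen_iff.1 isOpen_interior z hz
  rw [Real.ball_eq_Ioo] at hball
  have hballsub : Ioo (z - δ) (z + δ) ⊆ K n ∩ Icc a₀ b₀ := hball.trans interior_subset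
  have hzIcc : z ∈ Icc a₀ b₀ := (interior_subset hz).2
  have hempty : Ioo (z - δ) (z + δ) ∩ Aᶜ = ∅ := by
    rw [eq_empty_iff_forall_notMem]
    rintro w ⟨hw, hwA⟩
    obtain ⟨ε₀, hε₀, hgap⟩ := hattori_left_gap (hKc n) hwA
    obtain ⟨v, hv1, hv2⟩ := exists_between (show max (z - δ) (w - ε₀) < w from
      max_lt hw.1 (by linarith))
    have hvK : v ∈ K n := (hballsub ⟨lt_of_le_of_lt (le_max_left _ _) hv1,
      lt_trans hv2 hw.2⟩).1
    have hvmem : v ∈ K n ∩ Ico (w - ε₀) w :=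
      ⟨hvK, le_of_lt (lt_of_le_of_lt (le_max_right _ _) hv1), hv2⟩
    rw [hgap] at hvmem
    exact notMem_empty _ hvmem
  have hzcl : z ∈ @closure ℝ (hattori A) Aᶜ := hsubcl hzIcc
  rw [@mem_closure_iff ℝ (hattori A) _ _] at hzcl
  have hne2 := hzcl (Ioo (z - δ) (z + δ)) (hattori_isOpen_of_isOpen isOpen_Ioo)
    ⟨by linarith, by linarith⟩
  rw [hempty] at hne2
  exact hne2.ne_empty rfl
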